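/- Let A be any finite set of vertices of T. Then the frontier satisfies |F(A)| ≥ |A|/(M−1). -/

import Mathlib

open SimpleGraph

/-- `x'` is a child of `x` in the tree `G` rooted at `x₀`: it is adjacent to `x`
and one step further away from the root. -/
def IsChild {V : Type*} (G : SimpleGraph V) (x₀ x x' : V) : Prop :=
  G.Adj x x' ∧ G.dist x₀ x' = G.dist x₀ x + 1

/-- The subtree generated by `x'` (relative to `x`): the set of vertices reachable
from `x'` by a walk not passing through `x`. -/
def SubtreeOf {V : Type*} (G : SimpleGraph V) (x x' : V) : Set V :=
  {y | ∃ p : G.Walk x' y, x ∉ p.support}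

/-- The frontier of a set `A`: vertices `x ∈ A` having a child `x'` whose
subtree is disjoint from `A`. -/
def Frontier {V : Type*} (G : SimpleGraph V) (x₀ : V) (A : Set V) : Set V :=
  {x ∈ A | ∃ x', IsChild G x₀ x x' ∧ SubtreeOf G x x' ∩ A = ∅}

/-- The exterior boundary of `A`: the children `x'` of frontier vertices `x`
whose subtree is disjoint from `A`. -/
def ExtBoundary {V : Type*} (G : SimpleGraph V) (x₀ : V) (A : Set V) : Set V :=
  {x' | ∃ x ∈ Frontier G x₀ A, IsChild G x₀ x x' ∧ SubtreeOf G x x' ∩ A = ∅}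


section
variable {V : Type*} {G : SimpleGraph V}

private lemma exists_geodesic (hconn : G.Connected) (u v : V) :
    ∃ p : G.Walk u v, p.IsPath ∧ p.length = G.dist u v := by
  classical
  obtain ⟨p, hp⟩ := hconn.exists_walk_length_eq_dist u v
  exact ⟨p.bypass, p.bypass_isPath,
    le_antisymm (hp ▸ Walk.length_bypass_le p) (dist_le _)⟩

private lemma geodesic_split (hconn : G.Connected) {u v w : V} {p : G.Walk u v}
    (hl : p.length = G.dist u v) (hw : w ∈ p.support) :
    G.dist u w + G.dist w v = G.dist u v := by
  classical
  have h1 : G.dist u w ≤ (p.takeUntil w hw).length := dist_le _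
  have h2 : G.dist w v ≤ (p.dropUntil w hw).length := dist_le _
  have h3 : (p.takeUntil w hw).length + (p.dropUntil w hw).length = p.length := by
    rw [← Walk.length_append, p.take_spec hw]
  have h4 := hconn.dist_triangle (u := u) (v := w) (w := v)
  omega

private lemma adj_dist_aux (hconn : G.Connected) (hacyc : G.IsAcyclic) (x₀ : V) {u v : V}
    (h : G.Adj u v) (hle : G.dist x₀ u ≤ G.dist x₀ v) :
    G.dist x₀ v = G.dist x₀ u + 1 := by
  have h1 : G.dist u v ≤ 1 := by simpa using dist_le h.toWalk
  have htri := hconn.dist_triangle (u := x₀) (v := u) (w := v)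
  rcases Nat.lt_or_ge (G.dist x₀ u) (G.dist x₀ v) with hlt | hge
  · omega
  have heq : G.dist x₀ v = G.dist x₀ u := le_antisymm hge hle
  exfalso
  obtain ⟨p, hp, hlp⟩ := exists_geodesic hconn x₀ u
  have hvp : v ∉ p.support := by
    intro hv
    have hs := geodesic_split hconn hlp hv
    have hpos : 0 < G.dist v u := hconn.pos_dist_of_ne h.ne'
    omega
  have hP : (p.concat h).IsPath := by
    rw [Walk.isPath_def, Walk.support_concat]
    simpa [List.concat_eq_append, List.nodup_append] using ⟨hp.support_nodup, fun a ha hav => hvp (hav ▸ ha)⟩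
  obtain ⟨q, hq, hlq⟩ := exists_geodesic hconn x₀ v
  have := hacyc.path_unique ⟨p.concat h, hP⟩ ⟨q, hq⟩
  have hlen := congrArg (fun r : G.Path x₀ v => r.1.length) this
  simp only [Walk.length_concat] at hlen
  omega

private lemma adj_dist_cases (hconn : G.Connected) (hacyc : G.IsAcyclic) (x₀ : V) {u v : V}
    (h : G.Adj u v) :
    G.dist x₀ v = G.dist x₀ u + 1 ∨ G.dist x₀ u = G.dist x₀ v + 1 := by
  rcases le_total (G.dist x₀ u) (G.dist x₀ v) with hle | hle
  · exact Or.inl (adj_dist_aux hconn hacyc x₀ h hle)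
  · exact Or.inr (adj_dist_aux hconn hacyc x₀ h.symm hle)

private lemma parent_unique (hconn : G.Connected) (hacyc : G.IsAcyclic) (x₀ : V)
    {u u' v : V} (h : G.Adj u v) (h' : G.Adj u' v)
    (hd : G.dist x₀ v = G.dist x₀ u + 1) (hd' : G.dist x₀ v = G.dist x₀ u' + 1) :
    u = u' := by
  obtain ⟨p, hp, hlp⟩ := exists_geodesic hconn x₀ u
  obtain ⟨p', hp', hlp'⟩ := exists_geodesic hconn x₀ u'
  have hvp : v ∉ p.support := by
    intro hv; have hs := geodesic_split hconn hlp hv; omega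
  have hvp' : v ∉ p'.support := by
    intro hv; have hs := geodesic_split hconn hlp' hv; omega
  have hP : (p.concat h).IsPath := by
    rw [Walk.isPath_def, Walk.support_concat]
    simpa [List.concat_eq_append, List.nodup_append] using ⟨hp.support_nodup, fun a ha hav => hvp (hav ▸ ha)⟩
  have hP' : (p'.concat h').IsPath := by
    rw [Walk.isPath_def, Walk.support_concat]
    simpa [List.concat_eq_append, List.nodup_append] using ⟨hp'.support_nodup, fun a ha hav => hvp' (hav ▸ ha)⟩
  have heq := hacyc.path_unique ⟨p.concat h, hP⟩ ⟨p'.concat h', hP'⟩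
  have := Walk.concat_inj (congrArg Subtype.val heq)
  exact this.1

private lemma parent_exists (hconn : G.Connected) (hacyc : G.IsAcyclic) (x₀ : V)
    {v : V} (hv : v ≠ x₀) :
    ∃ u, G.Adj u v ∧ G.dist x₀ v = G.dist x₀ u + 1 := by
  obtain ⟨p, hp, hlp⟩ := exists_geodesic hconn x₀ v
  have hd : 0 < G.dist x₀ v := hconn.pos_dist_of_ne (Ne.symm hv)
  cases hr : p.reverse with
  | nil =>
    exfalso
    have := congrArg Walk.length hr
    simp only [Walk.length_reverse, Walk.length_nil] at this
    omega
  | @cons _ w _ h q =>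
    refine ⟨w, h.symm, ?_⟩
    have hlen : q.length + 1 = G.dist x₀ v := by
      have := congrArg Walk.length hr
      simp only [Walk.length_reverse, Walk.length_cons] at this
      omega
    have hw : G.dist x₀ w ≤ q.length := by
      have := dist_le q.reverse
      simpa [dist_comm] using this
    rcases adj_dist_cases hconn hacyc x₀ h.symm with hc | hc
    · exact hc
    · omega

end
section
variable {V : Type*} {G : SimpleGraph V}

/-- `a` is an ancestor of `b` (relative to root `x₀`). -/
private def Anc (G : SimpleGraph V) (x₀ a b : V) : Prop :=
  G.dist x₀ b = G.dist x₀ a + G.dist a b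

private lemma anc_refl (x₀ a : V) : Anc G x₀ a a := by
  simp [Anc]

private lemma anc_child_step (hconn : G.Connected) {x₀ a v v' : V}
    (ha : Anc G x₀ a v) (h : G.Adj v v') (hd : G.dist x₀ v' = G.dist x₀ v + 1) :
    Anc G x₀ a v' := by
  have t0 : G.dist v v' ≤ 1 := by simpa using dist_le h.toWalk
  have t1 : G.dist a v' ≤ G.dist a v + G.dist v v' := hconn.dist_triangle
  have t2 : G.dist x₀ v' ≤ G.dist x₀ a + G.dist a v' := hconn.dist_triangle
  unfold Anc at *
  omega

private lemma anc_parent_step (hconn : G.Connected) (hacyc : G.IsAcyclic) {x₀ a v v' : V}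
    (ha : Anc G x₀ a v) (hne : v ≠ a) (h' : G.Adj v' v)
    (hd : G.dist x₀ v = G.dist x₀ v' + 1) :
    Anc G x₀ a v' := by
  obtain ⟨p, hp, hlp⟩ := exists_geodesic hconn a v
  have hL : 0 < G.dist a v := hconn.pos_dist_of_ne (Ne.symm hne)
  cases hr : p.reverse with
  | nil =>
    exfalso
    have := congrArg Walk.length hr
    simp only [Walk.length_reverse, Walk.length_nil] at this
    omega
  | @cons _ w _ h q =>
    -- h : G.Adj v w, q : G.Walk w a
    have hlen : q.length + 1 = G.dist a v := by
      have := congrArg Walk.length hr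
      simp only [Walk.length_reverse, Walk.length_cons] at this
      omega
    have hw : G.dist a w ≤ q.length := by
      have := dist_le q.reverse
      simpa [dist_comm] using this
    have t2 : G.dist x₀ w ≤ G.dist x₀ a + G.dist a w := hconn.dist_triangle
    rcases adj_dist_cases hconn hacyc x₀ h with hc | hc
    · exfalso; unfold Anc at ha; omega
    · -- w is a parent of v, hence w = v'
      have hww : w = v' := parent_unique hconn hacyc x₀ h.symm h' hc hd
      subst hww
      unfold Anc at *
      omega

private lemma anc_antisymm (hconn : G.Connected) {x₀ a b : V}
    (ha : Anc G x₀ a b) (hd : G.dist x₀ a = G.dist x₀ b) : a = b := by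
  unfold Anc at ha
  have : G.dist a b = 0 := by omega
  exact (hconn.dist_eq_zero_iff).mp this

private lemma anc_of_anc_anc (hconn : G.Connected) (hacyc : G.IsAcyclic) (x₀ : V) :
    ∀ n {a b z : V}, G.dist b z = n →
      Anc G x₀ a z → Anc G x₀ b z → G.dist x₀ a ≤ G.dist x₀ b → Anc G x₀ a b := by
  intro n
  induction n with
  | zero =>
    intro a b z h0 ha hb _
    have : b = z := (hconn.dist_eq_zero_iff).mp h0
    subst this; exact ha
  | succ n ih =>
    intro a b z hn ha hb hle
    have hzb : z ≠ b := by
      intro h; subst h; rw [dist_self] at hn; omega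
    have hz0 : z ≠ x₀ := by
      intro h; subst h
      unfold Anc at hb; rw [dist_self] at hb; omega
    obtain ⟨u, hu, hdu⟩ := parent_exists hconn hacyc x₀ hz0
    have hza : z ≠ a := by
      intro h; subst h
      unfold Anc at hb; omega
    have ha' : Anc G x₀ a u := anc_parent_step hconn hacyc ha hza hu hdu
    have hb' : Anc G x₀ b u := anc_parent_step hconn hacyc hb hzb hu hdu
    have hbu : G.dist b u = n := by
      unfold Anc at hb hb'; omega
    exact ih hbu ha' hb' hle

private lemma anc_dist_le {x₀ a b : V} (ha : Anc G x₀ a b) :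
    G.dist x₀ a ≤ G.dist x₀ b := by
  unfold Anc at ha; omega

end
section
variable {V : Type*} {G : SimpleGraph V}

private lemma subtree_anc_aux (hconn : G.Connected) (hacyc : G.IsAcyclic) {x₀ x x' y : V}
    (hc : IsChild G x₀ x x') :
    ∀ {v : V} (p : G.Walk v y), x ∉ p.support → Anc G x₀ x' v → Anc G x₀ x' y := by
  intro v p
  induction p with
  | nil => intro _ hv; exact hv
  | @cons v u _ h q ih =>
    intro hxs hv
    have hxv : x ≠ v := by simp [Walk.support_cons] at hxs; tauto
    have hxq : x ∉ q.support := by simp [Walk.support_cons] at hxs; tauto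
    rcases adj_dist_cases hconn hacyc x₀ h with hcase | hcase
    · exact ih hxq (anc_child_step hconn hv h hcase)
    · by_cases hvx' : v = x'
      · subst hvx'
        exfalso
        have hux : u = x := parent_unique hconn hacyc x₀ h.symm hc.1 hcase hc.2
        exact hxq (hux ▸ q.start_mem_support)
      · exact ih hxq (anc_parent_step hconn hacyc hv hvx' h.symm hcase)

private lemma subtree_anc (hconn : G.Connected) (hacyc : G.IsAcyclic) {x₀ x x' y : V}
    (hc : IsChild G x₀ x x') (hy : y ∈ SubtreeOf G x x') : Anc G x₀ x' y := by
  obtain ⟨p, hxp⟩ := hy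
  exact subtree_anc_aux hconn hacyc hc p hxp (anc_refl x₀ x')

private lemma anc_subtree (hconn : G.Connected) {x₀ x x' y : V}
    (hc : IsChild G x₀ x x') (ha : Anc G x₀ x' y) : y ∈ SubtreeOf G x x' := by
  obtain ⟨p, hp, hlp⟩ := exists_geodesic hconn x' y
  refine ⟨p, fun hx => ?_⟩
  have hsplit := geodesic_split hconn hlp hx
  have hxx : x' ≠ x := hc.1.ne'
  have h1 : G.dist x' x = 1 := by
    have hle : G.dist x' x ≤ 1 := by simpa using dist_le hc.1.symm.toWalk
    have := hconn.pos_dist_of_ne hxx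
    omega
  have h2 : G.dist x₀ y ≤ G.dist x₀ x + G.dist x y := hconn.dist_triangle
  have h3 := hc.2
  unfold Anc at ha
  omega

end
section
variable {V : Type*} {G : SimpleGraph V}

/-- The children of `x` as a finset. -/
private noncomputable def childFinset (G : SimpleGraph V) [G.LocallyFinite] (x₀ x : V) :
    Finset V :=
  (G.neighborFinset x).filter (fun y => G.dist x₀ y = G.dist x₀ x + 1)

private lemma mem_childFinset [G.LocallyFinite] {x₀ x y : V} :
    y ∈ childFinset G x₀ x ↔ IsChild G x₀ x y := by
  simp [childFinset, IsChild, mem_neighborFinset]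

private lemma two_le_card_child (hconn : G.Connected) (hacyc : G.IsAcyclic)
    [G.LocallyFinite] (x₀ x : V) (hdeg : 3 ≤ G.degree x) :
    2 ≤ (childFinset G x₀ x).card := by
  classical
  set P := (G.neighborFinset x).filter (fun y => G.dist x₀ x = G.dist x₀ y + 1) with hP
  have hsplit : G.neighborFinset x ⊆ childFinset G x₀ x ∪ P := by
    intro y hy
    rw [mem_neighborFinset] at hy
    rcases adj_dist_cases hconn hacyc x₀ hy with hc | hc
    · exact Finset.mem_union_left _ (by simp [childFinset, mem_neighborFinset, hy, hc])
    · exact Finset.mem_union_right _ (by simp [hP, mem_neighborFinset, hy, hc])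
  have hcardP : P.card ≤ 1 := by
    refine Finset.card_le_one.mpr (fun a ha b hb => ?_)
    simp only [hP, Finset.mem_filter, mem_neighborFinset] at ha hb
    exact parent_unique hconn hacyc x₀ ha.1.symm hb.1.symm ha.2 hb.2
  have h1 : G.degree x ≤ (childFinset G x₀ x).card + P.card := by
    have := Finset.card_le_card hsplit
    have h2 := Finset.card_union_le (childFinset G x₀ x) P
    rw [← card_neighborFinset_eq_degree]
    omega
  omega

private lemma card_child_le_degree [G.LocallyFinite] (x₀ x : V) :
    (childFinset G x₀ x).card ≤ G.degree x := by
  rw [← card_neighborFinset_eq_degree]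
  exact Finset.card_le_card (Finset.filter_subset _ _)

private lemma card_child_lt_degree (hconn : G.Connected) (hacyc : G.IsAcyclic)
    [G.LocallyFinite] {x₀ x : V} (hx : x ≠ x₀) :
    (childFinset G x₀ x).card + 1 ≤ G.degree x := by
  classical
  obtain ⟨u, hu, hdu⟩ := parent_exists hconn hacyc x₀ hx
  have hun : u ∈ G.neighborFinset x := by rw [mem_neighborFinset]; exact hu.symm
  have hnc : u ∉ childFinset G x₀ x := by
    rw [mem_childFinset]
    intro hch
    have := hch.2
    omega
  have hsub : insert u (childFinset G x₀ x) ⊆ G.neighborFinset x := by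
    intro y hy
    rcases Finset.mem_insert.mp hy with rfl | hy
    · exact hun
    · exact Finset.mem_of_mem_filter _ hy
  have := Finset.card_le_card hsub
  rw [Finset.card_insert_of_notMem hnc] at this
  rw [← card_neighborFinset_eq_degree]
  omega

private lemma frontier_subset (x₀ : V) (A : Set V) : Frontier G x₀ A ⊆ A :=
  fun _ hx => hx.1

private lemma extBoundary_finite [G.LocallyFinite] (x₀ : V) {A : Set V} (hA : A.Finite) :
    (ExtBoundary G x₀ A).Finite := by
  have hsub : ExtBoundary G x₀ A ⊆ ⋃ x ∈ A, (G.neighborSet x) := by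
    rintro c ⟨x, hxF, hxc, -⟩
    exact Set.mem_biUnion hxF.1 hxc.1
  exact ((hA.biUnion (fun x _ => (G.neighborSet x).toFinite)).subset hsub)

end
section
variable {V : Type*} {G : SimpleGraph V}

private lemma extb_card (hconn : G.Connected) (hacyc : G.IsAcyclic)
    [G.LocallyFinite] (x₀ : V) (hdeg3 : ∀ x, 3 ≤ G.degree x) :
    ∀ n (A : Set V), A.Finite → A.Nonempty → A.ncard = n →
      A.ncard + 1 ≤ (ExtBoundary G x₀ A).ncard := by
  intro n
  induction n using Nat.strong_induction_on with
  | _ n ih =>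
  intro A hA hne hcard
  classical
  -- a deepest element z of A
  obtain ⟨z, hzA, hzmax⟩ : ∃ z ∈ A, ∀ a ∈ A, G.dist x₀ a ≤ G.dist x₀ z := by
    obtain ⟨z, hz, hm⟩ := Set.Finite.exists_maximalFor (fun a => G.dist x₀ a) A hA hne
    refine ⟨z, hz, fun a ha => ?_⟩
    rcases le_total (G.dist x₀ a) (G.dist x₀ z) with h | h
    · exact h
    · exact (hm ha h).ge
  -- z has two distinct children
  have h2c := two_le_card_child hconn hacyc x₀ z (hdeg3 z)
  obtain ⟨c1, hc1m, c2, hc2m, hc12⟩ := Finset.one_lt_card.mp (show 1 < (childFinset G x₀ z).card by omega)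
  rw [mem_childFinset] at hc1m hc2m
  -- all children of z have subtree disjoint from A
  have hdisj : ∀ c, IsChild G x₀ z c → SubtreeOf G z c ∩ A = ∅ := by
    intro c hc
    rw [Set.eq_empty_iff_forall_notMem]
    rintro y ⟨hyS, hyA⟩
    have hanc := subtree_anc hconn hacyc hc hyS
    have h1 := anc_dist_le hanc
    have h2 := hzmax y hyA
    have h3 := hc.2
    omega
  have hzF : z ∈ Frontier G x₀ A := ⟨hzA, c1, hc1m, hdisj _ hc1m⟩
  have hc1H : c1 ∈ ExtBoundary G x₀ A := ⟨z, hzF, hc1m, hdisj _ hc1m⟩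
  have hc2H : c2 ∈ ExtBoundary G x₀ A := ⟨z, hzF, hc2m, hdisj _ hc2m⟩
  have hHfin : (ExtBoundary G x₀ A).Finite := extBoundary_finite x₀ hA
  by_cases hA' : (A \ {z}).Nonempty
  · -- inductive step
    have hA'f : (A \ {z}).Finite := hA.subset Set.diff_subset
    have hcard' : (A \ {z}).ncard + 1 = A.ncard := Set.ncard_diff_singleton_add_one hzA hA
    have ihA' := ih (A \ {z}).ncard (by omega) (A \ {z}) hA'f hA' rfl
    set A' := A \ {z} with hA'def
    set HA := ExtBoundary G x₀ A with hHA
    set HA' := ExtBoundary G x₀ A' with hHA'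
    have hHfin' : HA'.Finite := extBoundary_finite x₀ hA'f
    -- children of z are not in HA'
    have hK2 : ∀ c, IsChild G x₀ z c → c ∉ HA' := by
      rintro c hc ⟨x, hxF, hxc, -⟩
      have hxz : x = z := parent_unique hconn hacyc x₀ hxc.1 hc.1 hxc.2 hc.2
      exact hxF.1.2 (by simp [hxz])
    -- at most one element of HA' is lost
    have hK3 : (HA' \ HA).Subsingleton := by
      have key : ∀ b b' x x' : V, IsChild G x₀ x b → IsChild G x₀ x' b' →
          x' ∈ Frontier G x₀ A' → SubtreeOf G x b ∩ A' = ∅ →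
          Anc G x₀ b z → Anc G x₀ b' z → G.dist x₀ b ≤ G.dist x₀ b' → b = b' := by
        intro b b' x x' hxb hxb' hxF' hSb hbz hbz' hle
        have hab : Anc G x₀ b b' :=
          anc_of_anc_anc hconn hacyc x₀ (G.dist b' z) rfl hbz hbz' hle
        by_cases heq : G.dist x₀ b = G.dist x₀ b'
        · exact anc_antisymm hconn hab heq
        · exfalso
          have hbb' : b' ≠ b := fun h => heq (by rw [h])
          have hax' : Anc G x₀ b x' := anc_parent_step hconn hacyc hab hbb' hxb'.1 hxb'.2
          have hmem : x' ∈ SubtreeOf G x b := anc_subtree hconn hxb hax'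
          have : x' ∈ SubtreeOf G x b ∩ A' := ⟨hmem, hxF'.1⟩
          rw [hSb] at this
          exact this
      rintro b1 ⟨hb1', hb1n⟩ b2 ⟨hb2', hb2n⟩
      obtain ⟨x1, hx1F, hx1c, hS1⟩ := hb1'
      obtain ⟨x2, hx2F, hx2c, hS2⟩ := hb2'
      have hz1 : z ∈ SubtreeOf G x1 b1 := by
        by_contra hzS
        refine hb1n ⟨x1, ⟨hx1F.1.1, b1, hx1c, ?_⟩, hx1c, ?_⟩ <;>
        · rw [Set.eq_empty_iff_forall_notMem]
          rintro y ⟨hyS, hyA⟩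
          by_cases hyz : y = z
          · exact hzS (hyz ▸ hyS)
          · have : y ∈ SubtreeOf G x1 b1 ∩ A' := ⟨hyS, hyA, hyz⟩
            rw [hS1] at this
            exact this
      have hz2 : z ∈ SubtreeOf G x2 b2 := by
        by_contra hzS
        refine hb2n ⟨x2, ⟨hx2F.1.1, b2, hx2c, ?_⟩, hx2c, ?_⟩ <;>
        · rw [Set.eq_empty_iff_forall_notMem]
          rintro y ⟨hyS, hyA⟩
          by_cases hyz : y = z
          · exact hzS (hyz ▸ hyS)
          · have : y ∈ SubtreeOf G x2 b2 ∩ A' := ⟨hyS, hyA, hyz⟩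
            rw [hS2] at this
            exact this
      have ha1 : Anc G x₀ b1 z := subtree_anc hconn hacyc hx1c hz1
      have ha2 : Anc G x₀ b2 z := subtree_anc hconn hacyc hx2c hz2
      rcases le_total (G.dist x₀ b1) (G.dist x₀ b2) with hle | hle
      · exact key b1 b2 x1 x2 hx1c hx2c hx2F hS1 ha1 ha2 hle
      · exact (key b2 b1 x2 x1 hx2c hx1c hx1F hS2 ha2 ha1 hle).symm
    -- counting
    have e1 : HA'.ncard ≤ (HA' ∩ HA).ncard + 1 := by
      have hdec : HA' = (HA' ∩ HA) ∪ (HA' \ HA) := by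
        rw [Set.inter_union_diff]
      have h1 : (HA' \ HA).ncard ≤ 1 := by
        rcases hK3.eq_empty_or_singleton with h | ⟨b, h⟩
        · simp [h]
        · simp [h]
      calc HA'.ncard = ((HA' ∩ HA) ∪ (HA' \ HA)).ncard := by rw [← hdec]
        _ ≤ (HA' ∩ HA).ncard + (HA' \ HA).ncard :=
            Set.ncard_union_le _ _
        _ ≤ (HA' ∩ HA).ncard + 1 := by omega
    have e2 : (HA' ∩ HA).ncard + 2 ≤ HA.ncard := by
      have hsub : (HA' ∩ HA) ∪ {c1, c2} ⊆ HA := by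
        rintro y (hy | hy)
        · exact hy.2
        · rcases hy with rfl | rfl
          · exact hc1H
          · exact hc2H
      have hd : Disjoint (HA' ∩ HA) {c1, c2} := by
        rw [Set.disjoint_right]
        rintro y (rfl | rfl) hy
        · exact hK2 _ hc1m hy.1
        · exact hK2 _ hc2m hy.1
      have hpair : ({c1, c2} : Set V).ncard = 2 := Set.ncard_pair hc12
      have hu : ((HA' ∩ HA) ∪ {c1, c2}).ncard
          = (HA' ∩ HA).ncard + ({c1, c2} : Set V).ncard :=
        Set.ncard_union_eq hd (hHfin'.subset Set.inter_subset_left)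
          (Set.finite_singleton c1 |>.insert c2 |>.subset (by simp [Set.pair_comm]))
      have hle := Set.ncard_le_ncard hsub hHfin
      omega
    omega
  · -- base case : A = {z}
    have hAz : A = {z} := by
      rw [Set.not_nonempty_iff_eq_empty, Set.diff_eq_empty] at hA'
      exact Set.Subset.antisymm hA' (by simpa using hzA)
    have hsub : ({c1, c2} : Set V) ⊆ ExtBoundary G x₀ A := by
      rintro y (rfl | rfl)
      · exact hc1H
      · exact hc2H
    have h2 : ({c1, c2} : Set V).ncard = 2 := Set.ncard_pair hc12
    have hle := Set.ncard_le_ncard hsub hHfin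
    have h1 : A.ncard = 1 := by rw [hAz]; exact Set.ncard_singleton z
    omega

end
section
variable {V : Type*} {G : SimpleGraph V}

private lemma extb_le (hconn : G.Connected) (hacyc : G.IsAcyclic)
    [G.LocallyFinite] (x₀ : V) (M : ℕ) (hM : 1 ≤ M) (hdegM : ∀ x, G.degree x ≤ M)
    {A : Set V} (hA : A.Finite) :
    (ExtBoundary G x₀ A).ncard ≤ (M - 1) * (Frontier G x₀ A).ncard + 1 := by
  classical
  have hFfin : (Frontier G x₀ A).Finite := hA.subset (frontier_subset x₀ A)
  set F := hFfin.toFinset with hF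
  set D : V → Finset V :=
    fun x => (childFinset G x₀ x).filter (fun c => SubtreeOf G x c ∩ A = ∅) with hD
  have hHB : ExtBoundary G x₀ A = ↑(F.biUnion D) := by
    ext c
    simp only [Finset.coe_biUnion, Set.mem_iUnion, Finset.mem_coe, hD,
      Finset.mem_filter, mem_childFinset, hF, Set.Finite.mem_toFinset]
    constructor
    · rintro ⟨x, hxF, hxc, hS⟩
      exact ⟨x, hxF, hxc, hS⟩
    · rintro ⟨x, hxF, hxc, hS⟩
      exact ⟨x, hxF, hxc, hS⟩
  have hDle : ∀ x, (D x).card ≤ (childFinset G x₀ x).card :=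
    fun x => Finset.card_le_card (Finset.filter_subset _ _)
  have hcard : ∀ x, x ≠ x₀ → (D x).card ≤ M - 1 := by
    intro x hx
    have h1 := card_child_lt_degree hconn hacyc (x₀ := x₀) hx
    have h2 := hdegM x
    have h3 := hDle x
    omega
  have hroot : ∀ x, (D x).card ≤ M := by
    intro x
    have h1 := card_child_le_degree (G := G) x₀ x
    have h2 := hdegM x
    have h3 := hDle x
    omega
  have hFcard : (Frontier G x₀ A).ncard = F.card := Set.ncard_eq_toFinset_card _ hFfin
  rw [hHB, Set.ncard_coe_finset, hFcard]
  calc (F.biUnion D).card ≤ ∑ x ∈ F, (D x).card := Finset.card_biUnion_le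
    _ ≤ (M - 1) * F.card + 1 := by
        by_cases hx₀ : x₀ ∈ F
        · rw [← Finset.sum_erase_add F _ hx₀]
          have h1 : ∑ x ∈ F.erase x₀, (D x).card ≤ (F.erase x₀).card * (M - 1) := by
            simpa [smul_eq_mul] using
              Finset.sum_le_card_nsmul (F.erase x₀) (fun x => (D x).card) (M - 1)
                (fun x hx => hcard x (Finset.ne_of_mem_erase hx))
          have h2 : (F.erase x₀).card + 1 = F.card := by
            rw [Finset.card_erase_of_mem hx₀]
            have : 1 ≤ F.card := Finset.card_pos.mpr ⟨x₀, hx₀⟩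
            omega
          have h3 := hroot x₀
          have h4 : (M - 1) * F.card = (F.erase x₀).card * (M - 1) + (M - 1) := by
            rw [← h2]; ring
          omega
        · have h1 : ∑ x ∈ F, (D x).card ≤ F.card * (M - 1) := by
            simpa [smul_eq_mul] using
              Finset.sum_le_card_nsmul F (fun x => (D x).card) (M - 1)
                (fun x hx => hcard x (fun h => hx₀ (h ▸ hx)))
          rw [Nat.mul_comm]
          omega

end

theorem frontier_card_ge {V : Type*} [Infinite V] (G : SimpleGraph V)
    [G.LocallyFinite] (hconn : G.Connected) (hacyc : G.IsAcyclic)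
    (x₀ : V) (M : ℕ) (hdeg : ∀ x, 3 ≤ G.degree x ∧ G.degree x ≤ M)
    (A : Set V) (hA : A.Finite) :
    (A.ncard : ℝ) / ((M : ℝ) - 1) ≤ ((Frontier G x₀ A).ncard : ℝ) := by
  classical
  have hM : 3 ≤ M := le_trans (hdeg (Classical.arbitrary V)).1 (hdeg (Classical.arbitrary V)).2
  have hM1 : (0 : ℝ) < (M : ℝ) - 1 := by
    have : (3 : ℝ) ≤ (M : ℝ) := by exact_mod_cast hM
    linarith
  rcases A.eq_empty_or_nonempty with rfl | hne
  · rw [Set.ncard_empty]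
    simp only [Nat.cast_zero, zero_div]
    positivity
  · have hkey : A.ncard ≤ (M - 1) * (Frontier G x₀ A).ncard := by
      have h1 := extb_card hconn hacyc x₀ (fun x => (hdeg x).1) A.ncard A hA hne rfl
      have h2 := extb_le hconn hacyc x₀ M (by omega) (fun x => (hdeg x).2) hA
      omega
    rw [div_le_iff₀ hM1]
    have hcast : ((M - 1 : ℕ) : ℝ) = (M : ℝ) - 1 := by
      rw [Nat.cast_sub (by omega)]
      norm_num
    calc (A.ncard : ℝ) ≤ ((M - 1) * (Frontier G x₀ A).ncard : ℕ) := by exact_mod_cast hkey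
      _ = ((Frontier G x₀ A).ncard : ℝ) * ((M : ℝ) - 1) := by
          push_cast [hcast]
          ring
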